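/- The map Rot : Fin n × Fin (n−1) → Fin n × Fin (n−1) defined by Rot(v, i) = (v + i + 1, n − 2 − i) (vertex arithmetic mod n) is a consistent rotation map for the complete graph K_n: it is an involution onto adjacent vertices and every column of the associated matrix v ↦ v+i+1 is a bijection of vertices. -/

import Mathlib

/-- `Rot(v,i) = (v + i + 1, n - 2 - i)` is a consistent rotation map on the complete graph
`K_n` (`n ≥ 2`): an involution landing on adjacent (i.e. distinct) vertices, with each column
`v ↦ v + i + 1` a bijection, equivalently each vertex receives each label exactly once. -/
theorem complete_rotation_consistent (n : ℕ) (hn : 2 ≤ n) :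
    letI Rot : ZMod n × Fin (n - 1) → ZMod n × Fin (n - 1) :=
      fun p => (p.1 + (p.2.1 : ZMod n) + 1,
        ⟨n - 2 - p.2.1, by have := p.2.isLt; omega⟩)
    (∀ p : ZMod n × Fin (n - 1), Rot (Rot p) = p) ∧
      (∀ p : ZMod n × Fin (n - 1), (⊤ : SimpleGraph (ZMod n)).Adj p.1 (Rot p).1) ∧
      (∀ i : Fin (n - 1), Function.Injective (fun v : ZMod n => (Rot (v, i)).1)) ∧
      (∀ w : ZMod n, ∀ j : Fin (n - 1), ∃! p : ZMod n × Fin (n - 1), Rot p = (w, j)) := by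
  haveI : NeZero n := ⟨by omega⟩
  have hinv : ∀ p : ZMod n × Fin (n - 1),
      (fun p : ZMod n × Fin (n - 1) => ((p.1 + (p.2.1 : ZMod n) + 1 : ZMod n),
        (⟨n - 2 - p.2.1, by have := p.2.isLt; omega⟩ : Fin (n - 1))))
      ((fun p : ZMod n × Fin (n - 1) => ((p.1 + (p.2.1 : ZMod n) + 1 : ZMod n),
        (⟨n - 2 - p.2.1, by have := p.2.isLt; omega⟩ : Fin (n - 1)))) p) = p := by
    rintro ⟨v, i⟩
    have hi := i.isLt
    dsimp only
    refine Prod.ext ?_ ?_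
    · show v + (i : ZMod n) + 1 + ((n - 2 - (i : ℕ) : ℕ) : ZMod n) + 1 = v
      have hnat : (i : ℕ) + 1 + (n - 2 - (i : ℕ)) + 1 = n := by omega
      have : ((i : ℕ) : ZMod n) + 1 + ((n - 2 - (i : ℕ) : ℕ) : ZMod n) + 1
          = ((n : ℕ) : ZMod n) := by
        have h3 : (((i : ℕ) + 1 + (n - 2 - (i : ℕ)) + 1 : ℕ) : ZMod n) = ((n : ℕ) : ZMod n) := by
          rw [hnat]
        push_cast at h3
        linear_combination h3
      rw [ZMod.natCast_self] at this
      calc v + (i : ZMod n) + 1 + ((n - 2 - (i : ℕ) : ℕ) : ZMod n) + 1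
          = v + (((i : ℕ) : ZMod n) + 1 + ((n - 2 - (i : ℕ) : ℕ) : ZMod n) + 1) := by ring
        _ = v := by rw [this, add_zero]
    · show (⟨n - 2 - (n - 2 - (i : ℕ)), _⟩ : Fin (n - 1)) = i
      exact Fin.ext (by simp; omega)
  have hadj : ∀ (v : ZMod n) (i : Fin (n-1)), v ≠ v + ((i : ℕ) : ZMod n) + 1 := by
    intro v i
    have hi := i.isLt
    intro h
    have h2 : (((i : ℕ) + 1 : ℕ) : ZMod n) = 0 := by
      push_cast
      linear_combination -h
    have := Nat.le_of_dvd (by omega) ((ZMod.natCast_eq_zero_iff _ _).mp h2)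
    omega
  refine ⟨hinv, fun p => by simpa using hadj p.1 p.2, ?_, ?_⟩
  · intro i v w h
    have : v + ((i : ℕ) : ZMod n) + 1 = w + ((i : ℕ) : ZMod n) + 1 := h
    exact by linear_combination this
  · intro w j
    refine ⟨_, hinv (w, j), fun p hp => ?_⟩
    have := congrArg (fun q : ZMod n × Fin (n-1) => ((q.1 + (q.2.1 : ZMod n) + 1 : ZMod n),
        (⟨n - 2 - q.2.1, by have := q.2.isLt; omega⟩ : Fin (n - 1)))) hp
    exact (hinv p).symm.trans this
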